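/- For n ≥ 3, the Connected-compelling chromatic number of the path P_n equals n − 1. -/
import Mathlib


open SimpleGraph

/-- A proper coloring of `G` with `k` colors. -/
def ProperColoring {V : Type*} {k : ℕ} (G : SimpleGraph V) (c : V → Fin k) : Prop :=
  ∀ ⦃u v : V⦄, G.Adj u v → c u ≠ c v

/-- `f` selects a rainbow committee of the coloring `c`: one vertex of each color. -/
def IsRainbow {V : Type*} {k : ℕ} (c : V → Fin k) (f : Fin k → V) : Prop :=
  ∀ i : Fin k, c (f i) = i

/-- The coloring `c` compels property `P`: every rainbow committee has property `P`. -/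
def Compels {V : Type*} {k : ℕ} (c : V → Fin k) (P : Set V → Prop) : Prop :=
  ∀ f : Fin k → V, IsRainbow c f → P (Set.range f)

/-- The `P`-compelling chromatic number of `G`: the least number of colors in a proper
coloring, using every color, in which every rainbow committee has property `P`. -/
noncomputable def compellingChromNum {V : Type*} (G : SimpleGraph V) (P : Set V → Prop) : ℕ :=
  sInf {k : ℕ | ∃ c : V → Fin k,
    ProperColoring G c ∧ Function.Surjective c ∧ Compels c P}

/-- Property `Connected`: the set induces a connected subgraph of `G`. -/
def InducesConnected {V : Type*} (G : SimpleGraph V) (S : Set V) : Prop :=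
  (G.induce S).Connected

/-- The Connected-compelling chromatic number. -/
noncomputable def connCompellingChromNum {V : Type*} (G : SimpleGraph V) : ℕ :=
  compellingChromNum G (InducesConnected G)

lemma aux_reachable_apply_eq {V α : Type*} {G : SimpleGraph V} (g : V → α)
    (hg : ∀ a b : V, G.Adj a b → g a = g b) {u v : V} (h : G.Reachable u v) : g u = g v := by
  obtain ⟨w⟩ := h
  induction w with
  | nil => rfl
  | cons h p ih => exact (hg _ _ h).trans ih

lemma aux_convex {n : ℕ} {S : Set (Fin n)}
    (hS : InducesConnected (pathGraph n) S) {x y z : Fin n}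
    (hx : x ∈ S) (hz : z ∈ S) (hxy : x ≤ y) (hyz : y ≤ z) : y ∈ S := by
  by_contra hy
  have hgc : ∀ a b : S, ((pathGraph n).induce S).Adj a b →
      decide (y.val < a.val.val) = decide (y.val < b.val.val) := by
    rintro ⟨a, ha⟩ ⟨b, hb⟩ hab
    have hadj : (pathGraph n).Adj a b := hab
    rw [pathGraph_adj] at hadj
    have hya : y.val ≠ a.val := fun h => hy (Fin.ext h ▸ ha)
    have hyb : y.val ≠ b.val := fun h => hy (Fin.ext h ▸ hb)
    simp only [decide_eq_decide]
    omega
  have := aux_reachable_apply_eq _ hgc (hS.preconnected ⟨x, hx⟩ ⟨z, hz⟩)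
  simp only [decide_eq_decide] at this
  rw [Fin.le_def] at hxy hyz
  have hyz' : y.val ≠ z.val := fun h => hy (Fin.ext h ▸ hz)
  omega

lemma aux_icc_connected {n : ℕ} (a b : Fin n) (hab : a ≤ b) :
    InducesConnected (pathGraph n) (Set.Icc a b) := by
  rw [InducesConnected, connected_iff]
  have haI : a ∈ Set.Icc a b := ⟨le_refl a, hab⟩
  constructor
  · have key : ∀ (d : ℕ) (x : Fin n) (hx : x ∈ Set.Icc a b), x.val = a.val + d →
        ((pathGraph n).induce (Set.Icc a b)).Reachable ⟨x, hx⟩ ⟨a, haI⟩ := by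
      intro d
      induction d with
      | zero =>
        intro x hx h
        have hxa : x = a := Fin.ext (by omega)
        subst hxa
        exact Reachable.refl _
      | succ d ih =>
        intro x hx h
        obtain ⟨hax, hxb⟩ := Set.mem_Icc.mp hx
        rw [Fin.le_def] at hax hxb
        have hx1 : x.val - 1 < n := by omega
        have hx' : (⟨x.val - 1, hx1⟩ : Fin n) ∈ Set.Icc a b :=
          Set.mem_Icc.mpr ⟨Fin.le_def.mpr (by simp; omega), Fin.le_def.mpr (by simp; omega)⟩
        have hadj : ((pathGraph n).induce (Set.Icc a b)).Adj ⟨⟨x.val - 1, hx1⟩, hx'⟩ ⟨x, hx⟩ := by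
          show (pathGraph n).Adj _ x
          rw [pathGraph_adj]
          left; simp; omega
        exact (hadj.symm.reachable).trans (ih _ hx' (by simp; omega))
    rintro ⟨x, hx⟩ ⟨y, hy⟩
    have hax : a.val ≤ x.val := Fin.le_def.mp (Set.mem_Icc.mp hx).1
    have hay : a.val ≤ y.val := Fin.le_def.mp (Set.mem_Icc.mp hy).1
    exact (key (x.val - a.val) x hx (by omega)).trans (key (y.val - a.val) y hy (by omega)).symm
  · exact ⟨⟨a, haI⟩⟩

/-- For `n ≥ 3`, the Connected-compelling chromatic number of the path `P_n` is `n - 1`. -/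
theorem connCompellingChromNum_pathGraph (n : ℕ) (hn : 3 ≤ n) :
    connCompellingChromNum (pathGraph n) = n - 1 := by
  rw [connCompellingChromNum, compellingChromNum]
  have hmem : (n - 1) ∈ {k : ℕ | ∃ c : Fin n → Fin k,
      ProperColoring (pathGraph n) c ∧ Function.Surjective c ∧
        Compels c (InducesConnected (pathGraph n))} := by
    refine ⟨fun v => if h : v.val < n - 1 then ⟨v.val, h⟩ else ⟨0, by omega⟩, ?_, ?_, ?_⟩
    · intro u v hadj hc
      rw [pathGraph_adj] at hadj
      simp only [] at hc
      have hu := u.isLt; have hv := v.isLt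
      split_ifs at hc <;> rw [Fin.mk.injEq] at hc <;> omega
    · intro i
      exact ⟨⟨i.val, by omega⟩, by simp [i.isLt]⟩
    · intro f hf
      have hkey : ∀ i : Fin (n-1), (f i).val = i.val ∨ ((f i).val = n - 1 ∧ i.val = 0) := by
        intro i
        have h := hf i
        simp only [] at h
        by_cases hlt : (f i).val < n - 1
        · left
          rw [dif_pos hlt] at h
          have := congrArg Fin.val h; simpa using this
        · right
          rw [dif_neg hlt] at h
          have h0 := congrArg Fin.val h; simp at h0
          have := (f i).isLt
          exact ⟨by omega, h0.symm⟩
      set i0 : Fin (n-1) := ⟨0, by omega⟩ with hi0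
      rcases hkey i0 with h0 | h0
      · have hrange : Set.range f = Set.Icc (⟨0, by omega⟩ : Fin n) ⟨n-2, by omega⟩ := by
          ext v
          simp only [Set.mem_range, Set.mem_Icc, Fin.le_def]
          constructor
          · rintro ⟨i, rfl⟩
            rcases hkey i with h | h
            · have := i.isLt; simp only [h]; omega
            · exfalso
              have : i = i0 := Fin.ext h.2
              rw [this] at h; omega
          · rintro ⟨_, hv2⟩
            have hvlt : v.val < n - 1 := by omega
            refine ⟨⟨v.val, hvlt⟩, ?_⟩
            rcases hkey ⟨v.val, hvlt⟩ with h | h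
            · exact Fin.ext h
            · exfalso
              have : (⟨v.val, hvlt⟩ : Fin (n-1)) = i0 := Fin.ext h.2
              rw [this] at h; omega
        rw [hrange]
        exact aux_icc_connected _ _ (Fin.mk_le_mk.mpr (by omega))
      · have hrange : Set.range f = Set.Icc (⟨1, by omega⟩ : Fin n) ⟨n-1, by omega⟩ := by
          ext v
          simp only [Set.mem_range, Set.mem_Icc, Fin.le_def]
          constructor
          · rintro ⟨i, rfl⟩
            rcases hkey i with h | h
            · have := i.isLt
              have hne : i ≠ i0 := by
                intro he; rw [he] at h; omega
              have : i.val ≠ 0 := fun he => hne (Fin.ext he)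
              simp only [h]; omega
            · simp only [h.1]; omega
          · rintro ⟨hv1, hv2⟩
            by_cases hvc : v.val ≤ n - 2
            · have hvlt : v.val < n - 1 := by omega
              refine ⟨⟨v.val, hvlt⟩, ?_⟩
              rcases hkey ⟨v.val, hvlt⟩ with h | h
              · exact Fin.ext h
              · exfalso; simp at h; omega
            · refine ⟨i0, Fin.ext ?_⟩
              simp only [h0.1]; omega
        rw [hrange]
        exact aux_icc_connected _ _ (Fin.mk_le_mk.mpr (by omega))
  apply le_antisymm (Nat.sInf_le hmem)
  apply le_csInf ⟨_, hmem⟩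
  rintro k ⟨c, hp, hs, hcomp⟩
  by_contra hlt
  push_neg at hlt
  choose rep hrep using hs
  set v0 : Fin n := ⟨0, by omega⟩ with hv0
  set vlast : Fin n := ⟨n-1, by omega⟩ with hvlast
  set vpen : Fin n := ⟨n-2, by omega⟩ with hvpen
  set t : Fin n := if c v0 = c vlast then vpen else vlast with ht
  have hne : c v0 ≠ c t := by
    rw [ht]
    split_ifs with h
    · rw [h]
      intro he
      exact hp (by rw [pathGraph_adj]; left; simp [hvpen, hvlast]; omega) he.symm
    · exact h
  set f : Fin k → Fin n := fun i => if i = c v0 then v0 else if i = c t then t else rep i with hfdef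
  have hrain : IsRainbow c f := by
    intro i
    simp only [hfdef]
    split_ifs with h1 h2
    · exact h1.symm
    · exact h2.symm
    · exact hrep i
  have hv0mem : v0 ∈ Set.range f := ⟨c v0, by rw [hfdef]; simp⟩
  have htmem : t ∈ Set.range f := ⟨c t, by simp only [hfdef]; rw [if_neg (fun h => hne h.symm)]; simp⟩
  have hconn := hcomp f hrain
  have hsub : Finset.Icc v0 t ⊆ Finset.image f Finset.univ := by
    intro y hy
    rw [Finset.mem_Icc] at hy
    have : y ∈ Set.range f := aux_convex hconn hv0mem htmem hy.1 hy.2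
    obtain ⟨i, hi⟩ := this
    exact Finset.mem_image.mpr ⟨i, Finset.mem_univ i, hi⟩
  have hcard := Finset.card_le_card hsub
  have hcard2 : (Finset.image f Finset.univ).card ≤ k := by
    calc (Finset.image f Finset.univ).card ≤ (Finset.univ : Finset (Fin k)).card :=
      Finset.card_image_le
    _ = k := by simp
  rw [Fin.card_Icc] at hcard
  have ht' : n - 2 ≤ t.val := by
    rw [ht]; split_ifs <;> simp [hvpen, hvlast] <;> omega
  simp only [hv0] at hcard
  omega
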